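/- arXiv:2109.10018 — 2 statements merged into one kernel-verified Lean document; each statement's English description precedes it below -/
import Mathlib

section
/- Given a constant specification CS for JTO such that CS^O = ∅, the consistency principle fails in interpreted-neighborhood semantics: for every deontic term t ∈ Tm^O and every agent i, not ⊨^N_CS ¬O[t]_i ⊥. -/
namespace JTO

/-- Epistemic justification terms. -/
inductive TmE (Const Var : Type) : Type
  | const : Const → TmE Const Var
  | var   : Var → TmE Const Var
  | bang  : TmE Const Var → TmE Const Var
  | plus  : TmE Const Var → TmE Const Var → TmE Const Var
  | times : TmE Const Var → TmE Const Var → TmE Const Var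

/-- Deontic (normative) justification terms. -/
inductive TmO (Const Var : Type) : Type
  | const : Const → TmO Const Var
  | var   : Var → TmO Const Var
  | ddag  : TmO Const Var → TmO Const Var
  | times : TmO Const Var → TmO Const Var → TmO Const Var

/-- Formulas of the logic JTO. -/
inductive Fm (Ag Const Var Atom : Type) : Type
  | atom  : Atom → Fm Ag Const Var Atom
  | bot   : Fm Ag Const Var Atom
  | imp   : Fm Ag Const Var Atom → Fm Ag Const Var Atom → Fm Ag Const Var Atom
  | next  : Fm Ag Const Var Atom → Fm Ag Const Var Atom
  | wprev : Fm Ag Const Var Atom → Fm Ag Const Var Atom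
  | untl  : Fm Ag Const Var Atom → Fm Ag Const Var Atom → Fm Ag Const Var Atom
  | snce  : Fm Ag Const Var Atom → Fm Ag Const Var Atom → Fm Ag Const Var Atom
  | jbox  : Ag → TmE Const Var → Fm Ag Const Var Atom → Fm Ag Const Var Atom
  | obox  : Ag → TmO Const Var → Fm Ag Const Var Atom → Fm Ag Const Var Atom

namespace Fm

variable {Ag Const Var Atom : Type}

/-- ¬φ := φ → ⊥ -/
def neg (φ : Fm Ag Const Var Atom) : Fm Ag Const Var Atom := φ.imp bot
/-- ⊤ := ¬⊥ -/
def top : Fm Ag Const Var Atom := neg bot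
/-- φ ∨ ψ := ¬φ → ψ -/
def disj (φ ψ : Fm Ag Const Var Atom) : Fm Ag Const Var Atom := (neg φ).imp ψ
/-- φ ∧ ψ := ¬(¬φ ∨ ¬ψ) -/
def conj (φ ψ : Fm Ag Const Var Atom) : Fm Ag Const Var Atom := neg (disj (neg φ) (neg ψ))
/-- φ ↔ ψ := (φ→ψ) ∧ (ψ→φ) -/
def biim (φ ψ : Fm Ag Const Var Atom) : Fm Ag Const Var Atom := conj (φ.imp ψ) (ψ.imp φ)
/-- strong previous ⊙ₛφ := ¬⊙_w¬φ -/
def sprev (φ : Fm Ag Const Var Atom) : Fm Ag Const Var Atom := neg (wprev (neg φ))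
/-- eventually ◇φ := ⊤ U φ -/
def ev (φ : Fm Ag Const Var Atom) : Fm Ag Const Var Atom := untl top φ
/-- always (henceforth) □φ := ¬◇¬φ -/
def alw (φ : Fm Ag Const Var Atom) : Fm Ag Const Var Atom := neg (ev (neg φ))
/-- once ◇⁻φ := ⊤ S φ -/
def once (φ : Fm Ag Const Var Atom) : Fm Ag Const Var Atom := snce top φ
/-- has-always-been □⁻φ := ¬◇⁻¬φ -/
def sofar (φ : Fm Ag Const Var Atom) : Fm Ag Const Var Atom := neg (once (neg φ))
/-- ⊡φ := □⁻φ ∧ □φ -/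
def boxdot (φ : Fm Ag Const Var Atom) : Fm Ag Const Var Atom := conj (sofar φ) (alw φ)
/-- weak until (unless) φ W ψ := (φ U ψ) ∨ □φ -/
def wuntl (φ ψ : Fm Ag Const Var Atom) : Fm Ag Const Var Atom := disj (untl φ ψ) (alw φ)
/-- permission P[s]ᵢφ := ¬O[s]ᵢ¬φ -/
def pbox (i : Ag) (t : TmO Const Var) (φ : Fm Ag Const Var Atom) : Fm Ag Const Var Atom :=
  neg (obox i t (neg φ))
/-- time = m, i.e. ⊙ₛ^m ⊙_w ⊥ -/
def timeEq : ℕ → Fm Ag Const Var Atom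
  | 0 => wprev bot
  | m + 1 => sprev (timeEq m)
/-- true_m(φ) := ⊡(time=m → φ) -/
def trueAt (m : ℕ) (φ : Fm Ag Const Var Atom) : Fm Ag Const Var Atom :=
  boxdot ((timeEq m).imp φ)

/-- Subformulas. -/
def subf : Fm Ag Const Var Atom → Set (Fm Ag Const Var Atom)
  | atom p => {atom p}
  | bot => {bot}
  | imp φ ψ => insert (imp φ ψ) (subf φ ∪ subf ψ)
  | next φ => insert (next φ) (subf φ)
  | wprev φ => insert (wprev φ) (subf φ)
  | untl φ ψ => insert (untl φ ψ) (subf φ ∪ subf ψ)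
  | snce φ ψ => insert (snce φ ψ) (subf φ ∪ subf ψ)
  | jbox i t φ => insert (jbox i t φ) (subf φ)
  | obox i t φ => insert (obox i t φ) (subf φ)

/-- Subf⁺(χ) := A_χ ∪ {¬ψ : ψ ∈ A_χ}, with A_χ = Subf(χ) ∪ Subf(⊤ S ⊙_w⊥). -/
def subfPlus (χ : Fm Ag Const Var Atom) : Set (Fm Ag Const Var Atom) :=
  (subf χ ∪ subf (snce top (wprev bot))) ∪ neg '' (subf χ ∪ subf (snce top (wprev bot)))

end Fm

variable {Ag Const Var Atom : Type}

/-- Propositional tautologies in the language of JTO. -/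
def Taut (φ : Fm Ag Const Var Atom) : Prop :=
  ∀ v : Fm Ag Const Var Atom → Bool,
    v Fm.bot = false → (∀ a b, v (a.imp b) = (!(v a) || v b)) → v φ = true

/-- The axioms of JTO. -/
inductive IsAxiom : Fm Ag Const Var Atom → Prop
  | taut {φ : Fm Ag Const Var Atom} : Taut φ → IsAxiom φ
  | nextK (φ ψ : Fm Ag Const Var Atom) :
      IsAxiom ((Fm.next (φ.imp ψ)).imp ((Fm.next φ).imp (Fm.next ψ)))
  | alwK (φ ψ : Fm Ag Const Var Atom) :
      IsAxiom ((Fm.alw (φ.imp ψ)).imp ((Fm.alw φ).imp (Fm.alw ψ)))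
  | fn (φ : Fm Ag Const Var Atom) :
      IsAxiom (Fm.biim (Fm.next (Fm.neg φ)) (Fm.neg (Fm.next φ)))
  | ind (φ : Fm Ag Const Var Atom) :
      IsAxiom ((Fm.alw (φ.imp (Fm.next φ))).imp (φ.imp (Fm.alw φ)))
  | untl1 (φ ψ : Fm Ag Const Var Atom) :
      IsAxiom ((Fm.untl φ ψ).imp (Fm.ev ψ))
  | untl2 (φ ψ : Fm Ag Const Var Atom) :
      IsAxiom (Fm.biim (Fm.untl φ ψ) (Fm.disj ψ (Fm.conj φ (Fm.next (Fm.untl φ ψ)))))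
  | sofarK (φ ψ : Fm Ag Const Var Atom) :
      IsAxiom ((Fm.sofar (φ.imp ψ)).imp ((Fm.sofar φ).imp (Fm.sofar ψ)))
  | wprevK (φ ψ : Fm Ag Const Var Atom) :
      IsAxiom ((Fm.wprev (φ.imp ψ)).imp ((Fm.wprev φ).imp (Fm.wprev ψ)))
  | sw (φ : Fm Ag Const Var Atom) : IsAxiom ((Fm.sprev φ).imp (Fm.wprev φ))
  | initial : IsAxiom (Fm.once (Fm.wprev (Fm.bot : Fm Ag Const Var Atom)))
  | sofarInd (φ : Fm Ag Const Var Atom) :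
      IsAxiom ((Fm.sofar (φ.imp (Fm.wprev φ))).imp (φ.imp (Fm.sofar φ)))
  | snce1 (φ ψ : Fm Ag Const Var Atom) : IsAxiom ((Fm.snce φ ψ).imp (Fm.once ψ))
  | snce2 (φ ψ : Fm Ag Const Var Atom) :
      IsAxiom (Fm.biim (Fm.snce φ ψ) (Fm.disj ψ (Fm.conj φ (Fm.sprev (Fm.snce φ ψ)))))
  | fp (φ : Fm Ag Const Var Atom) : IsAxiom (φ.imp (Fm.next (Fm.sprev φ)))
  | pf (φ : Fm Ag Const Var Atom) : IsAxiom (φ.imp (Fm.wprev (Fm.next φ)))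
  | app (i : Ag) (t s : TmE Const Var) (φ ψ : Fm Ag Const Var Atom) :
      IsAxiom ((Fm.jbox i t (φ.imp ψ)).imp ((Fm.jbox i s φ).imp (Fm.jbox i (TmE.times t s) ψ)))
  | sum1 (i : Ag) (t s : TmE Const Var) (φ : Fm Ag Const Var Atom) :
      IsAxiom ((Fm.jbox i t φ).imp (Fm.jbox i (TmE.plus t s) φ))
  | sum2 (i : Ag) (t s : TmE Const Var) (φ : Fm Ag Const Var Atom) :
      IsAxiom ((Fm.jbox i s φ).imp (Fm.jbox i (TmE.plus t s) φ))
  | fact (i : Ag) (t : TmE Const Var) (φ : Fm Ag Const Var Atom) :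
      IsAxiom ((Fm.jbox i t φ).imp φ)
  | pos (i : Ag) (t : TmE Const Var) (φ : Fm Ag Const Var Atom) :
      IsAxiom ((Fm.jbox i t φ).imp (Fm.jbox i (TmE.bang t) (Fm.jbox i t φ)))
  | appO (i : Ag) (t s : TmO Const Var) (φ ψ : Fm Ag Const Var Atom) :
      IsAxiom ((Fm.obox i t (φ.imp ψ)).imp ((Fm.obox i s φ).imp (Fm.obox i (TmO.times t s) ψ)))
  | noc (i : Ag) (t : TmO Const Var) (φ : Fm Ag Const Var Atom) :
      IsAxiom ((Fm.obox i t φ).imp (Fm.pbox i t φ))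
  | ofact (i : Ag) (t : TmO Const Var) (φ : Fm Ag Const Var Atom) :
      IsAxiom (Fm.obox i (TmO.ddag t) ((Fm.obox i t φ).imp φ))

/-- Formulas of the shape [c_{j_n}]_{i_n} … [c_{j_1}]_{i_1} φ with φ an axiom instance, n ≥ 1. -/
inductive EIter : Fm Ag Const Var Atom → Prop
  | base {i : Ag} {c : Const} {φ : Fm Ag Const Var Atom} :
      IsAxiom φ → EIter (Fm.jbox i (TmE.const c) φ)
  | step {i : Ag} {c : Const} {φ : Fm Ag Const Var Atom} :
      EIter φ → EIter (Fm.jbox i (TmE.const c) φ)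

/-- Formulas of the shape O[c_{j_n}]_{i_n} … O[c_{j_1}]_{i_1} φ with φ an axiom instance, n ≥ 1. -/
inductive OIter : Fm Ag Const Var Atom → Prop
  | base {i : Ag} {c : Const} {φ : Fm Ag Const Var Atom} :
      IsAxiom φ → OIter (Fm.obox i (TmO.const c) φ)
  | step {i : Ag} {c : Const} {φ : Fm Ag Const Var Atom} :
      OIter φ → OIter (Fm.obox i (TmO.const c) φ)

/-- A constant specification: a downward closed set of iterated constant-justification
assertions of axiom instances. -/
structure ConstSpec (Ag Const Var Atom : Type) where
  set : Set (Fm Ag Const Var Atom)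
  shape : ∀ φ ∈ set, EIter φ ∨ OIter φ
  dcE : ∀ (i : Ag) (c : Const) (φ : Fm Ag Const Var Atom),
    Fm.jbox i (TmE.const c) φ ∈ set → EIter φ → φ ∈ set
  dcO : ∀ (i : Ag) (c : Const) (φ : Fm Ag Const Var Atom),
    Fm.obox i (TmO.const c) φ ∈ set → OIter φ → φ ∈ set

/-- CS^E : the epistemic part of a constant specification. -/
def ConstSpec.csE (CS : ConstSpec Ag Const Var Atom) : Set (Fm Ag Const Var Atom) :=
  {φ ∈ CS.set | EIter φ}

/-- CS^O : the deontic part of a constant specification. -/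
def ConstSpec.csO (CS : ConstSpec Ag Const Var Atom) : Set (Fm Ag Const Var Atom) :=
  {φ ∈ CS.set | OIter φ}

/-- Derivability in the Hilbert system JTO_CS. -/
inductive Deriv (CS : ConstSpec Ag Const Var Atom) : Fm Ag Const Var Atom → Prop
  | ax {φ : Fm Ag Const Var Atom} : IsAxiom φ → Deriv CS φ
  | mp {φ ψ : Fm Ag Const Var Atom} : Deriv CS (φ.imp ψ) → Deriv CS φ → Deriv CS ψ
  | necNext {φ : Fm Ag Const Var Atom} : Deriv CS φ → Deriv CS (Fm.next φ)
  | necWPrev {φ : Fm Ag Const Var Atom} : Deriv CS φ → Deriv CS (Fm.wprev φ)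
  | necAlw {φ : Fm Ag Const Var Atom} : Deriv CS φ → Deriv CS (Fm.alw φ)
  | necSofar {φ : Fm Ag Const Var Atom} : Deriv CS φ → Deriv CS (Fm.sofar φ)
  | csax {φ : Fm Ag Const Var Atom} : φ ∈ CS.set → Deriv CS φ

/-- Conjunction of a list of formulas. -/
def conjList : List (Fm Ag Const Var Atom) → Fm Ag Const Var Atom
  | [] => Fm.top
  | φ :: l => Fm.conj φ (conjList l)

/-- T ⊢_CS φ iff ⊢_CS (ψ₁ ∧ … ∧ ψ_n) → φ for some ψ₁, …, ψ_n ∈ T. -/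
def DerivFrom (CS : ConstSpec Ag Const Var Atom) (T : Set (Fm Ag Const Var Atom))
    (φ : Fm Ag Const Var Atom) : Prop :=
  ∃ L : List (Fm Ag Const Var Atom), (∀ ψ ∈ L, ψ ∈ T) ∧ Deriv CS ((conjList L).imp φ)

/-- A set of formulas is consistent if it does not derive ⊥. -/
def Consistent (CS : ConstSpec Ag Const Var Atom) (T : Set (Fm Ag Const Var Atom)) : Prop :=
  ¬ DerivFrom CS T Fm.bot

end JTO
namespace JTO

variable {Ag Const Var Atom : Type}

/-- The data of an F-interpreted system (Fitting-style), without conditions. -/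
structure FQuasi (Ag Const Var Atom S : Type) where
  R : Set (ℕ → S)
  K : Ag → S → S → Prop
  KO : Ag → S → S → Prop
  E : Ag → S → TmE Const Var → Set (Fm Ag Const Var Atom)
  EO : Ag → S → TmO Const Var → Set (Fm Ag Const Var Atom)
  val : S → Set Atom

/-- Truth at a point (r, n) of an F-interpreted system. -/
def FQuasi.Sat {S : Type} (I : FQuasi Ag Const Var Atom S) :
    Fm Ag Const Var Atom → (ℕ → S) → ℕ → Prop
  | .atom p, r, n => p ∈ I.val (r n)
  | .bot, _, _ => False
  | .imp φ ψ, r, n => I.Sat φ r n → I.Sat ψ r n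
  | .next φ, r, n => I.Sat φ r (n + 1)
  | .wprev φ, r, n => n = 0 ∨ I.Sat φ r (n - 1)
  | .untl φ ψ, r, n => ∃ m, n ≤ m ∧ I.Sat ψ r m ∧ ∀ k, n ≤ k → k < m → I.Sat φ r k
  | .snce φ ψ, r, n => ∃ m, m ≤ n ∧ I.Sat ψ r m ∧ ∀ k, m < k → k ≤ n → I.Sat φ r k
  | .jbox i t φ, r, n =>
      φ ∈ I.E i (r n) t ∧ ∀ r' ∈ I.R, ∀ n' : ℕ, I.K i (r n) (r' n') → I.Sat φ r' n'
  | .obox i t φ, r, n =>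
      φ ∈ I.EO i (r n) t ∧ ∀ r' ∈ I.R, ∀ n' : ℕ, I.KO i (r n) (r' n') → I.Sat φ r' n'

/-- An F-interpreted system for JTO_CS. -/
structure FIS (Ag Const Var Atom S : Type) (CS : ConstSpec Ag Const Var Atom)
    extends FQuasi Ag Const Var Atom S where
  Sne : Nonempty S
  Rne : R.Nonempty
  Krefl : ∀ (i : Ag) (w : S), K i w w
  Ktrans : ∀ (i : Ag) (u v w : S), K i u v → K i v w → K i u w
  KOshift : ∀ (i : Ag) (w v : S), KO i w v → KO i v v
  Emono : ∀ (i : Ag) (v w : S) (t : TmE Const Var), K i v w → E i v t ⊆ E i w t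
  Ecs : ∀ (i : Ag) (w : S) (t : TmE Const Var) (φ : Fm Ag Const Var Atom),
    Fm.jbox i t φ ∈ CS.csE → φ ∈ E i w t
  Eapp : ∀ (i : Ag) (w : S) (t s : TmE Const Var) (φ ψ : Fm Ag Const Var Atom),
    φ.imp ψ ∈ E i w t → φ ∈ E i w s → ψ ∈ E i w (TmE.times t s)
  Epos : ∀ (i : Ag) (w : S) (t : TmE Const Var) (φ : Fm Ag Const Var Atom),
    φ ∈ E i w t → Fm.jbox i t φ ∈ E i w (TmE.bang t)
  EOcs : ∀ (i : Ag) (w : S) (t : TmO Const Var) (φ : Fm Ag Const Var Atom),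
    Fm.obox i t φ ∈ CS.csO → φ ∈ EO i w t
  EOapp : ∀ (i : Ag) (w : S) (t s : TmO Const Var) (φ ψ : Fm Ag Const Var Atom),
    φ.imp ψ ∈ EO i w t → φ ∈ EO i w s → ψ ∈ EO i w (TmO.times t s)
  EOcons : ∀ (i : Ag) (w : S) (t : TmO Const Var) (φ : Fm Ag Const Var Atom),
    φ ∈ EO i w t → Fm.neg φ ∉ EO i w t
  EOfact : ∀ (i : Ag) (w : S) (t : TmO Const Var) (φ : Fm Ag Const Var Atom),
    (Fm.obox i t φ).imp φ ∈ EO i w (TmO.ddag t)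

/-- Truth at a point of an F-interpreted system. -/
abbrev FIS.Sat {S : Type} {CS : ConstSpec Ag Const Var Atom}
    (I : FIS Ag Const Var Atom S CS) :
    Fm Ag Const Var Atom → (ℕ → S) → ℕ → Prop :=
  I.toFQuasi.Sat

/-- I ⊨ φ : truth at every point of the system. -/
def FIS.Valid {S : Type} {CS : ConstSpec Ag Const Var Atom}
    (I : FIS Ag Const Var Atom S CS) (φ : Fm Ag Const Var Atom) : Prop :=
  ∀ r ∈ I.R, ∀ n : ℕ, I.Sat φ r n

/-- ⊨_CS φ : validity in all F-interpreted systems for JTO_CS. -/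
def FValid (CS : ConstSpec Ag Const Var Atom) (φ : Fm Ag Const Var Atom) : Prop :=
  ∀ (S : Type) (I : FIS Ag Const Var Atom S CS), I.Valid φ

/-- T ⊨_CS φ : the local consequence relation over F-interpreted systems. -/
def FConseq (CS : ConstSpec Ag Const Var Atom) (T : Set (Fm Ag Const Var Atom))
    (φ : Fm Ag Const Var Atom) : Prop :=
  ∀ (S : Type) (I : FIS Ag Const Var Atom S CS), ∀ r ∈ I.R, ∀ n : ℕ,
    (∀ ψ ∈ T, I.Sat ψ r n) → I.Sat φ r n

/-- Maximal consistent sets of formulas. -/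
def MCS (CS : ConstSpec Ag Const Var Atom) : Set (Set (Fm Ag Const Var Atom)) :=
  {Γ | Consistent CS Γ ∧ ∀ Δ, Γ ⊂ Δ → ¬ Consistent CS Δ}

/-- χ-maximal consistent subsets of Subf⁺(χ). -/
def MCSx (CS : ConstSpec Ag Const Var Atom) (χ : Fm Ag Const Var Atom) :
    Set (Set (Fm Ag Const Var Atom)) :=
  {X | X ⊆ Fm.subfPlus χ ∧ Consistent CS X ∧
    ∀ Y, Y ⊆ Fm.subfPlus χ → X ⊂ Y → ¬ Consistent CS Y}

/-- The relation R_○ on MCS_χ (given by witnessing maximal consistent sets). -/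
def Rnext (CS : ConstSpec Ag Const Var Atom) (χ : Fm Ag Const Var Atom)
    (X Y : Set (Fm Ag Const Var Atom)) : Prop :=
  ∃ Γ ∈ MCS CS, ∃ Δ ∈ MCS CS, X = Γ ∩ Fm.subfPlus χ ∧ Y = Δ ∩ Fm.subfPlus χ ∧
    {φ | Fm.next φ ∈ Γ} ⊆ Δ

/-- Acceptable sequences of elements of MCS_χ. -/
def Acceptable (CS : ConstSpec Ag Const Var Atom) (χ : Fm Ag Const Var Atom)
    (X : ℕ → Set (Fm Ag Const Var Atom)) : Prop :=
  (∀ n, X n ∈ MCSx CS χ) ∧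
  (∀ n, Rnext CS χ (X n) (X (n + 1))) ∧
  (∀ n (φ ψ : Fm Ag Const Var Atom), Fm.untl φ ψ ∈ X n →
    ∃ m, n ≤ m ∧ ψ ∈ X m ∧ ∀ k, n ≤ k → k < m → φ ∈ X k) ∧
  Fm.wprev Fm.bot ∈ X 0

/-- The canonical epistemic accessibility relation. -/
def canK (CS : ConstSpec Ag Const Var Atom) (χ : Fm Ag Const Var Atom) (i : Ag)
    (X Y : Set (Fm Ag Const Var Atom)) : Prop :=
  ∀ Δ ∈ MCS CS, Y = Δ ∩ Fm.subfPlus χ →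
    ∃ Γ ∈ MCS CS, X = Γ ∩ Fm.subfPlus χ ∧
      {φ | ∃ t : TmE Const Var, Fm.jbox i t φ ∈ Γ} ⊆ Δ

/-- The canonical evidence function. -/
def canE (CS : ConstSpec Ag Const Var Atom) (χ : Fm Ag Const Var Atom) (i : Ag)
    (X : Set (Fm Ag Const Var Atom)) (t : TmE Const Var) : Set (Fm Ag Const Var Atom) :=
  {φ | ∀ Γ ∈ MCS CS, X = Γ ∩ Fm.subfPlus χ → Fm.jbox i t φ ∈ Γ}

/-- The canonical deontic accessibility relation. -/
def canKO (CS : ConstSpec Ag Const Var Atom) (χ : Fm Ag Const Var Atom) (i : Ag)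
    (X Y : Set (Fm Ag Const Var Atom)) : Prop :=
  ∃ Γ ∈ MCS CS, ∃ Δ ∈ MCS CS, X = Γ ∩ Fm.subfPlus χ ∧ Y = Δ ∩ Fm.subfPlus χ ∧
    {φ | ∃ t : TmO Const Var, Fm.obox i t φ ∈ Γ} ⊆ Δ

/-- The canonical normative evidence function. -/
def canEO (CS : ConstSpec Ag Const Var Atom) (χ : Fm Ag Const Var Atom) (i : Ag)
    (X : Set (Fm Ag Const Var Atom)) (t : TmO Const Var) : Set (Fm Ag Const Var Atom) :=
  {φ | ∀ Γ ∈ MCS CS, X = Γ ∩ Fm.subfPlus χ → Fm.obox i t φ ∈ Γ}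

/-- The χ-canonical F-interpreted system (as structured data). -/
def canFQuasi (CS : ConstSpec Ag Const Var Atom) (χ : Fm Ag Const Var Atom) :
    FQuasi Ag Const Var Atom ↥(MCSx CS χ) where
  R := {r | Acceptable CS χ (fun n => ((r n : Set (Fm Ag Const Var Atom))))}
  K := fun i X Y => canK CS χ i X.1 Y.1
  KO := fun i X Y => canKO CS χ i X.1 Y.1
  E := fun i X t => canE CS χ i X.1 t
  EO := fun i X t => canEO CS χ i X.1 t
  val := fun X => {p | Fm.atom p ∈ X.1}

end JTO
namespace JTO

variable {Ag Const Var Atom : Type}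

/-- The data of a quasi-interpreted-neighborhood system. -/
structure NQuasi (Ag Const Var Atom S : Type) where
  R : Set (ℕ → S)
  N : Ag → S → TmE Const Var → Set (Set S)
  NO : Ag → S → TmO Const Var → Set (Set S)
  val : S → Set Atom
  valF : S → Set (Fm Ag Const Var Atom)

/-- The image Im(R) of the system of runs. -/
def NQuasi.Im {S : Type} (I : NQuasi Ag Const Var Atom S) : Set S :=
  {w | ∃ r ∈ I.R, ∃ n : ℕ, r n = w}

/-- Truth at a point (r, n) of a quasi-interpreted-neighborhood system. -/
def NQuasi.SatP {S : Type} (I : NQuasi Ag Const Var Atom S) :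
    Fm Ag Const Var Atom → (ℕ → S) → ℕ → Prop
  | .atom p, r, n => p ∈ I.val (r n)
  | .bot, _, _ => False
  | .imp φ ψ, r, n => I.SatP φ r n → I.SatP ψ r n
  | .next φ, r, n => I.SatP φ r (n + 1)
  | .wprev φ, r, n => n = 0 ∨ I.SatP φ r (n - 1)
  | .untl φ ψ, r, n => ∃ m, n ≤ m ∧ I.SatP ψ r m ∧ ∀ k, n ≤ k → k < m → I.SatP φ r k
  | .snce φ ψ, r, n => ∃ m, m ≤ n ∧ I.SatP ψ r m ∧ ∀ k, m < k → k ≤ n → I.SatP φ r k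
  | .jbox i t φ, r, n =>
      {w | (∃ r' ∈ I.R, ∃ n' : ℕ, r' n' = w ∧ I.SatP φ r' n') ∨
            (w ∉ I.Im ∧ φ ∈ I.valF w)} ∈ I.N i (r n) t
  | .obox i t φ, r, n =>
      {w | (∃ r' ∈ I.R, ∃ n' : ℕ, r' n' = w ∧ I.SatP φ r' n') ∨
            (w ∉ I.Im ∧ φ ∈ I.valF w)} ∈ I.NO i (r n) t

/-- Truth at a state of a quasi-interpreted-neighborhood system. -/
def NQuasi.SatS {S : Type} (I : NQuasi Ag Const Var Atom S)
    (φ : Fm Ag Const Var Atom) (w : S) : Prop :=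
  (∃ r ∈ I.R, ∃ n : ℕ, r n = w ∧ I.SatP φ r n) ∨ (w ∉ I.Im ∧ φ ∈ I.valF w)

/-- The truth set ⟦φ⟧ of a formula. -/
def NQuasi.tset {S : Type} (I : NQuasi Ag Const Var Atom S)
    (φ : Fm Ag Const Var Atom) : Set S :=
  {w | I.SatS φ w}

/-- An interpreted-neighborhood system for JTO_CS. -/
structure NIS (Ag Const Var Atom S : Type) (CS : ConstSpec Ag Const Var Atom)
    extends NQuasi Ag Const Var Atom S where
  Sne : Nonempty S
  Rne : R.Nonempty
  Ncs : ∀ (i : Ag) (t : TmE Const Var) (φ : Fm Ag Const Var Atom),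
    Fm.jbox i t φ ∈ CS.csE → ∀ w ∈ toNQuasi.Im, toNQuasi.tset φ ∈ N i w t
  Napp : ∀ (i : Ag), ∀ w ∈ toNQuasi.Im, ∀ (t s : TmE Const Var) (φ ψ : Fm Ag Const Var Atom),
    toNQuasi.tset (φ.imp ψ) ∈ N i w t → toNQuasi.tset φ ∈ N i w s →
      toNQuasi.tset ψ ∈ N i w (TmE.times t s)
  Nsum : ∀ (i : Ag), ∀ w ∈ toNQuasi.Im, ∀ (t s : TmE Const Var) (φ : Fm Ag Const Var Atom),
    toNQuasi.tset φ ∈ N i w s →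
      toNQuasi.tset φ ∈ N i w (TmE.plus t s) ∧ toNQuasi.tset φ ∈ N i w (TmE.plus s t)
  Nrefl : ∀ (i : Ag), ∀ w ∈ toNQuasi.Im, ∀ (t : TmE Const Var) (φ : Fm Ag Const Var Atom),
    toNQuasi.tset φ ∈ N i w t → w ∈ toNQuasi.tset φ
  Npos : ∀ (i : Ag), ∀ w ∈ toNQuasi.Im, ∀ (t : TmE Const Var) (φ : Fm Ag Const Var Atom),
    toNQuasi.tset φ ∈ N i w t → toNQuasi.tset (Fm.jbox i t φ) ∈ N i w (TmE.bang t)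
  NOcs : ∀ (i : Ag) (t : TmO Const Var) (φ : Fm Ag Const Var Atom),
    Fm.obox i t φ ∈ CS.csO → ∀ w ∈ toNQuasi.Im, toNQuasi.tset φ ∈ NO i w t
  NOapp : ∀ (i : Ag), ∀ w ∈ toNQuasi.Im, ∀ (t s : TmO Const Var) (φ ψ : Fm Ag Const Var Atom),
    toNQuasi.tset (φ.imp ψ) ∈ NO i w t → toNQuasi.tset φ ∈ NO i w s →
      toNQuasi.tset ψ ∈ NO i w (TmO.times t s)
  NOnoc : ∀ (i : Ag), ∀ w ∈ toNQuasi.Im, ∀ (t : TmO Const Var) (φ : Fm Ag Const Var Atom),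
    toNQuasi.tset φ ∈ NO i w t → toNQuasi.tset (Fm.neg φ) ∉ NO i w t
  NOfact : ∀ (i : Ag), ∀ w ∈ toNQuasi.Im, ∀ (t : TmO Const Var) (φ : Fm Ag Const Var Atom),
    toNQuasi.tset ((Fm.obox i t φ).imp φ) ∈ NO i w (TmO.ddag t)

/-- Truth at a point of an interpreted-neighborhood system. -/
abbrev NIS.SatP {S : Type} {CS : ConstSpec Ag Const Var Atom}
    (I : NIS Ag Const Var Atom S CS) :
    Fm Ag Const Var Atom → (ℕ → S) → ℕ → Prop :=
  I.toNQuasi.SatP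

/-- I ⊨ φ for an interpreted-neighborhood system. -/
def NIS.Valid {S : Type} {CS : ConstSpec Ag Const Var Atom}
    (I : NIS Ag Const Var Atom S CS) (φ : Fm Ag Const Var Atom) : Prop :=
  ∀ r ∈ I.R, ∀ n : ℕ, I.SatP φ r n

/-- ⊨^N_CS φ : validity in all interpreted-neighborhood systems for JTO_CS. -/
def NValid (CS : ConstSpec Ag Const Var Atom) (φ : Fm Ag Const Var Atom) : Prop :=
  ∀ (S : Type) (I : NIS Ag Const Var Atom S CS), I.Valid φ

/-- T ⊨^N_CS φ : local consequence over interpreted-neighborhood systems. -/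
def NConseq (CS : ConstSpec Ag Const Var Atom) (T : Set (Fm Ag Const Var Atom))
    (φ : Fm Ag Const Var Atom) : Prop :=
  ∀ (S : Type) (I : NIS Ag Const Var Atom S CS), ∀ r ∈ I.R, ∀ n : ℕ,
    (∀ ψ ∈ T, I.SatP ψ r n) → I.SatP φ r n

end JTO

namespace JTO

section Counterexample

open Classical

variable {Ag Const Var Atom : Type}

section Generic

variable {S : Type} (I : NQuasi Ag Const Var Atom S) (r : ℕ → S) (n : ℕ)

theorem satP_imp (a b : Fm Ag Const Var Atom) :
    I.SatP (a.imp b) r n ↔ (I.SatP a r n → I.SatP b r n) := Iff.rfl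

theorem satP_neg (a : Fm Ag Const Var Atom) :
    I.SatP (Fm.neg a) r n ↔ ¬ I.SatP a r n := Iff.rfl

theorem satP_top : I.SatP (Fm.top : Fm Ag Const Var Atom) r n := fun h => h

theorem satP_disj (a b : Fm Ag Const Var Atom) :
    I.SatP (Fm.disj a b) r n ↔ (I.SatP a r n ∨ I.SatP b r n) := by
  show ((I.SatP a r n → False) → I.SatP b r n) ↔ _
  tauto

theorem satP_conj (a b : Fm Ag Const Var Atom) :
    I.SatP (Fm.conj a b) r n ↔ (I.SatP a r n ∧ I.SatP b r n) := by
  show ((((I.SatP a r n → False) → False) → (I.SatP b r n → False)) → False) ↔ _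
  tauto

theorem satP_biim (a b : Fm Ag Const Var Atom) :
    I.SatP (Fm.biim a b) r n ↔ (I.SatP a r n ↔ I.SatP b r n) := by
  rw [Fm.biim, satP_conj, satP_imp, satP_imp]
  tauto

theorem satP_ev (a : Fm Ag Const Var Atom) :
    I.SatP (Fm.ev a) r n ↔ ∃ m, n ≤ m ∧ I.SatP a r m := by
  constructor
  · rintro ⟨m, h1, h2, -⟩; exact ⟨m, h1, h2⟩
  · rintro ⟨m, h1, h2⟩; exact ⟨m, h1, h2, fun _ _ _ => satP_top I r _⟩

theorem satP_alw (a : Fm Ag Const Var Atom) :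
    I.SatP (Fm.alw a) r n ↔ ∀ m, n ≤ m → I.SatP a r m := by
  constructor
  · intro h m hm
    by_contra hb
    exact h ⟨m, hm, hb, fun _ _ _ => satP_top I r _⟩
  · rintro h ⟨m, hm, hb, -⟩
    exact hb (h m hm)

theorem satP_once (a : Fm Ag Const Var Atom) :
    I.SatP (Fm.once a) r n ↔ ∃ m, m ≤ n ∧ I.SatP a r m := by
  constructor
  · rintro ⟨m, h1, h2, -⟩; exact ⟨m, h1, h2⟩
  · rintro ⟨m, h1, h2⟩; exact ⟨m, h1, h2, fun _ _ _ => satP_top I r _⟩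

theorem satP_sofar (a : Fm Ag Const Var Atom) :
    I.SatP (Fm.sofar a) r n ↔ ∀ m, m ≤ n → I.SatP a r m := by
  constructor
  · intro h m hm
    by_contra hb
    exact h ⟨m, hm, hb, fun _ _ _ => satP_top I r _⟩
  · rintro h ⟨m, hm, hb, -⟩
    exact hb (h m hm)

theorem satP_wprev (a : Fm Ag Const Var Atom) :
    I.SatP (Fm.wprev a) r n ↔ (n = 0 ∨ I.SatP a r (n - 1)) := Iff.rfl

theorem satP_sprev (a : Fm Ag Const Var Atom) :
    I.SatP (Fm.sprev a) r n ↔ (n ≠ 0 ∧ I.SatP a r (n - 1)) := by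
  show (¬ (n = 0 ∨ ¬ I.SatP a r (n - 1))) ↔ _
  tauto

theorem satP_untl (a b : Fm Ag Const Var Atom) :
    I.SatP (Fm.untl a b) r n ↔
      ∃ m, n ≤ m ∧ I.SatP b r m ∧ ∀ k, n ≤ k → k < m → I.SatP a r k := Iff.rfl

theorem satP_snce (a b : Fm Ag Const Var Atom) :
    I.SatP (Fm.snce a b) r n ↔
      ∃ m, m ≤ n ∧ I.SatP b r m ∧ ∀ k, m < k → k ≤ n → I.SatP a r k := Iff.rfl

theorem taut_satP {φ : Fm Ag Const Var Atom} (h : Taut φ) : I.SatP φ r n := by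
  classical
  have hv := h (fun a => if I.SatP a r n then true else false) (if_neg (fun x => x)) ?_
  · by_cases hφ : I.SatP φ r n
    · exact hφ
    · have hv' : (if I.SatP φ r n then true else false) = true := hv
      rw [if_neg hφ] at hv'
      exact absurd hv' (by simp)
  · intro a b
    by_cases ha : I.SatP a r n <;> by_cases hb : I.SatP b r n <;>
      simp [satP_imp I r n a b, ha, hb]

end Generic

/-- The distinguished set of "obligated" formulas for each agent and deontic term. -/
def cGood (i : Ag) (s : TmO Const Var) : Set (Fm Ag Const Var Atom) :=
  {φ | φ = Fm.bot ∨ ∃ (s' : TmO Const Var) (χ : Fm Ag Const Var Atom),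
    s = TmO.ddag s' ∧ φ = (Fm.obox i s' χ).imp χ}

theorem bot_mem_cGood (i : Ag) (s : TmO Const Var) :
    (Fm.bot : Fm Ag Const Var Atom) ∈ cGood i s := Or.inl rfl

theorem imp_cGood {i : Ag} {s : TmO Const Var} {φ ψ : Fm Ag Const Var Atom}
    (h : φ.imp ψ ∈ cGood i s) :
    ∃ s' : TmO Const Var, s = TmO.ddag s' ∧ φ = Fm.obox i s' ψ := by
  rcases h with h | ⟨s', χ, hs, hφ⟩
  · exact absurd h (by intro h; cases h)
  · cases hφ
    exact ⟨s', hs, rfl⟩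

theorem obox_not_mem_cGood {i j : Ag} {s s' : TmO Const Var} {χ : Fm Ag Const Var Atom} :
    Fm.obox j s' χ ∉ cGood i s := by
  rintro (h | ⟨s'', χ', -, h⟩) <;> cases h

/-- The counterexample quasi-interpreted-neighborhood system. -/
def cM (Ag Const Var Atom : Type) :
    NQuasi Ag Const Var Atom (ℕ ⊕ Fm Ag Const Var Atom) where
  R := {fun k => Sum.inl k}
  N := fun _ w _ => {A | w ∈ A}
  NO := fun i _ s => {A | ∃ χ ∈ cGood i s, ∀ ψ, Sum.inr ψ ∈ A ↔ ψ = χ}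
  val := fun _ => ∅
  valF := fun w => match w with | Sum.inl _ => ∅ | Sum.inr ψ => {ψ}

/-- The unique run of the counterexample system. -/
def crun : ℕ → ℕ ⊕ Fm Ag Const Var Atom := Sum.inl

theorem crun_mem : (crun : ℕ → ℕ ⊕ Fm Ag Const Var Atom) ∈ (cM Ag Const Var Atom).R := rfl

theorem im_char : ∀ w ∈ (cM Ag Const Var Atom).Im, ∃ n, w = Sum.inl n := by
  rintro w ⟨r, hr, n, rfl⟩
  obtain rfl : r = (fun k => Sum.inl k) := hr
  exact ⟨n, rfl⟩

theorem inr_not_mem_im (ψ : Fm Ag Const Var Atom) :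
    Sum.inr ψ ∉ (cM Ag Const Var Atom).Im := by
  intro h
  rcases im_char _ h with ⟨n, hn⟩
  cases hn

theorem satS_inr (φ ψ : Fm Ag Const Var Atom) :
    (cM Ag Const Var Atom).SatS φ (Sum.inr ψ) ↔ φ = ψ := by
  constructor
  · rintro (⟨r, hr, n, hn, -⟩ | ⟨-, h⟩)
    · obtain rfl : r = (fun k => Sum.inl k) := hr
      cases hn
    · exact h
  · intro h
    exact Or.inr ⟨inr_not_mem_im ψ, h⟩

theorem satS_inl (φ : Fm Ag Const Var Atom) (n : ℕ) :
    (cM Ag Const Var Atom).SatS φ (Sum.inl n) ↔ (cM Ag Const Var Atom).SatP φ crun n := by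
  constructor
  · rintro (⟨r, hr, m, hm, h⟩ | ⟨hw, -⟩)
    · obtain rfl : r = (fun k => Sum.inl k) := hr
      obtain rfl : m = n := Sum.inl.inj hm
      exact h
    · exact absurd ⟨crun, crun_mem, n, rfl⟩ hw
  · intro h
    exact Or.inl ⟨crun, crun_mem, n, rfl, h⟩

theorem inr_mem_tset (φ ψ : Fm Ag Const Var Atom) :
    Sum.inr ψ ∈ (cM Ag Const Var Atom).tset φ ↔ φ = ψ := satS_inr φ ψ

theorem inl_mem_tset (φ : Fm Ag Const Var Atom) (n : ℕ) :
    Sum.inl n ∈ (cM Ag Const Var Atom).tset φ ↔ (cM Ag Const Var Atom).SatP φ crun n :=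
  satS_inl φ n

theorem satP_jbox_iff (i : Ag) (t : TmE Const Var) (φ : Fm Ag Const Var Atom) (n : ℕ) :
    (cM Ag Const Var Atom).SatP (Fm.jbox i t φ) crun n ↔
      (cM Ag Const Var Atom).SatP φ crun n := by
  show Sum.inl n ∈ (cM Ag Const Var Atom).tset φ ↔ _
  exact inl_mem_tset φ n

theorem tset_mem_NO_iff (i : Ag) (w : ℕ ⊕ Fm Ag Const Var Atom) (s : TmO Const Var)
    (φ : Fm Ag Const Var Atom) :
    (cM Ag Const Var Atom).tset φ ∈ (cM Ag Const Var Atom).NO i w s ↔ φ ∈ cGood i s := by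
  constructor
  · rintro ⟨χ, hχ, h⟩
    obtain rfl : φ = χ := (inr_mem_tset φ χ).mp ((h χ).mpr rfl)
    exact hχ
  · intro h
    exact ⟨φ, h, fun ψ => (inr_mem_tset φ ψ).trans eq_comm⟩

theorem satP_obox_iff (i : Ag) (s : TmO Const Var) (φ : Fm Ag Const Var Atom) (n : ℕ) :
    (cM Ag Const Var Atom).SatP (Fm.obox i s φ) crun n ↔ φ ∈ cGood i s := by
  show (cM Ag Const Var Atom).tset φ ∈ (cM Ag Const Var Atom).NO i (crun n) s ↔ _
  exact tset_mem_NO_iff i (crun n) s φ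

theorem axiom_satP {φ : Fm Ag Const Var Atom} (h : IsAxiom φ) (n : ℕ) :
    (cM Ag Const Var Atom).SatP φ crun n := by
  induction h with
  | @taut φ ht => exact taut_satP _ crun n ht
  | nextK φ ψ => exact fun h1 h2 => h1 h2
  | alwK φ ψ =>
      intro h1 h2
      rw [satP_alw] at h1 h2 ⊢
      exact fun m hm => h1 m hm (h2 m hm)
  | fn φ => exact (satP_biim _ crun n _ _).mpr Iff.rfl
  | ind φ =>
      intro h1 h2
      rw [satP_alw] at h1 ⊢
      exact fun m hm => Nat.le_induction h2 (fun k hk ih => h1 k hk ih) m hm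
  | untl1 φ ψ =>
      rintro ⟨m, h1, h2, -⟩
      rw [satP_ev]
      exact ⟨m, h1, h2⟩
  | untl2 φ ψ =>
      rw [satP_biim, satP_disj, satP_conj]
      constructor
      · rintro ⟨m, hnm, hψ, hk⟩
        rcases Nat.eq_or_lt_of_le hnm with rfl | hlt
        · exact Or.inl hψ
        · refine Or.inr ⟨hk n le_rfl hlt, ⟨m, hlt, hψ, fun k hk1 hk2 => hk k (by omega) hk2⟩⟩
      · rintro (hψ | ⟨hφ, m, h1, h2, h3⟩)
        · exact ⟨n, le_rfl, hψ, fun k hk1 hk2 => by omega⟩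
        · refine ⟨m, by omega, h2, fun k hk1 hk2 => ?_⟩
          rcases Nat.eq_or_lt_of_le hk1 with rfl | hlt
          · exact hφ
          · exact h3 k (by omega) hk2
  | sofarK φ ψ =>
      intro h1 h2
      rw [satP_sofar] at h1 h2 ⊢
      exact fun m hm => h1 m hm (h2 m hm)
  | wprevK φ ψ =>
      rintro (h | h1) h2
      · exact Or.inl h
      · rcases h2 with h | h2
        · exact Or.inl h
        · exact Or.inr (h1 h2)
  | sw φ =>
      intro h
      rw [satP_sprev] at h
      exact Or.inr h.2
  | initial =>
      rw [satP_once]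
      exact ⟨0, Nat.zero_le n, Or.inl rfl⟩
  | sofarInd φ =>
      intro h1 h2
      rw [satP_sofar] at h1 ⊢
      have key : ∀ d, d ≤ n → (cM Ag Const Var Atom).SatP φ crun (n - d) := by
        intro d
        induction d with
        | zero => intro _; simpa using h2
        | succ d ih =>
            intro hd
            rcases h1 (n - d) (by omega) (ih (by omega)) with h | h
            · omega
            · have : n - d - 1 = n - (d + 1) := by omega
              rwa [this] at h
      intro m hm
      have := key (n - m) (by omega)
      rwa [show n - (n - m) = m by omega] at this
  | snce1 φ ψ =>
      rintro ⟨m, h1, h2, -⟩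
      rw [satP_once]
      exact ⟨m, h1, h2⟩
  | snce2 φ ψ =>
      rw [satP_biim, satP_disj, satP_conj, satP_sprev]
      constructor
      · rintro ⟨m, hmn, hψ, hk⟩
        rcases Nat.eq_or_lt_of_le hmn with rfl | hlt
        · exact Or.inl hψ
        · refine Or.inr ⟨hk n hlt le_rfl, by omega,
            ⟨m, by omega, hψ, fun k hk1 hk2 => hk k hk1 (by omega)⟩⟩
      · rintro (hψ | ⟨hφ, hne, m, h1, h2, h3⟩)
        · exact ⟨n, le_rfl, hψ, fun k hk1 hk2 => by omega⟩
        · refine ⟨m, by omega, h2, fun k hk1 hk2 => ?_⟩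
          rcases Nat.lt_or_ge k n with hlt | hge
          · exact h3 k hk1 (by omega)
          · obtain rfl : k = n := by omega
            exact hφ
  | fp φ => exact fun h => (satP_sprev _ crun (n + 1) φ).mpr ⟨Nat.succ_ne_zero n, h⟩
  | pf φ =>
      intro h
      cases n with
      | zero => exact Or.inl rfl
      | succ k => exact Or.inr h
  | app i t s φ ψ =>
      intro h1 h2
      rw [satP_jbox_iff] at h1 h2 ⊢
      exact h1 h2
  | sum1 i t s φ =>
      intro h
      rw [satP_jbox_iff] at h ⊢
      exact h
  | sum2 i t s φ =>
      intro h
      rw [satP_jbox_iff] at h ⊢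
      exact h
  | fact i t φ =>
      intro h
      rwa [satP_jbox_iff] at h
  | pos i t φ =>
      intro h
      rw [satP_jbox_iff]
      exact h
  | appO i t s φ ψ =>
      intro h1 h2
      rw [satP_obox_iff] at h1 h2
      obtain ⟨s', -, rfl⟩ := imp_cGood h1
      exact absurd h2 obox_not_mem_cGood
  | noc i t φ =>
      intro h h2
      rw [satP_obox_iff] at h h2
      obtain ⟨s', -, rfl⟩ := imp_cGood h2
      exact absurd h obox_not_mem_cGood
  | ofact i t φ =>
      rw [satP_obox_iff]
      exact Or.inr ⟨t, φ, rfl, rfl⟩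

theorem eiter_satP {φ : Fm Ag Const Var Atom} (h : EIter φ) (n : ℕ) :
    (cM Ag Const Var Atom).SatP φ crun n := by
  induction h with
  | base ha => rw [satP_jbox_iff]; exact axiom_satP ha n
  | step _ ih => rw [satP_jbox_iff]; exact ih

/-- The counterexample interpreted-neighborhood system. -/
def cI (CS : ConstSpec Ag Const Var Atom) (hCS : CS.csO = ∅) :
    NIS Ag Const Var Atom (ℕ ⊕ Fm Ag Const Var Atom) CS where
  toNQuasi := cM Ag Const Var Atom
  Sne := ⟨Sum.inl 0⟩
  Rne := ⟨crun, crun_mem⟩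
  Ncs := by
    intro i t φ hmem w hw
    rcases im_char w hw with ⟨n, rfl⟩
    have hE : EIter (Fm.jbox i t φ) := hmem.2
    have := eiter_satP hE n
    rw [satP_jbox_iff] at this
    exact (inl_mem_tset φ n).mpr this
  Napp := by
    intro i w hw t s φ ψ h1 h2
    rcases im_char w hw with ⟨n, rfl⟩
    have h1' := (inl_mem_tset (φ.imp ψ) n).mp h1
    have h2' := (inl_mem_tset φ n).mp h2
    exact (inl_mem_tset ψ n).mpr (h1' h2')
  Nsum := fun _ _ _ _ _ _ h => ⟨h, h⟩
  Nrefl := fun _ _ _ _ _ h => h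
  Npos := by
    intro i w hw t φ h
    rcases im_char w hw with ⟨n, rfl⟩
    refine (inl_mem_tset (Fm.jbox i t φ) n).mpr ?_
    rw [satP_jbox_iff]
    exact (inl_mem_tset φ n).mp h
  NOcs := by
    intro i t φ hmem
    rw [hCS] at hmem
    exact hmem.elim
  NOapp := by
    intro i w hw t s φ ψ h1 h2
    rw [tset_mem_NO_iff] at h1 h2
    obtain ⟨s', -, rfl⟩ := imp_cGood h1
    exact absurd h2 obox_not_mem_cGood
  NOnoc := by
    intro i w hw t φ h h2
    rw [tset_mem_NO_iff] at h h2
    obtain ⟨s', -, rfl⟩ := imp_cGood h2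
    exact absurd h obox_not_mem_cGood
  NOfact := by
    intro i w hw t φ
    rw [tset_mem_NO_iff]
    exact Or.inr ⟨t, φ, rfl, rfl⟩

end Counterexample

/-- if CS^O = ∅, the consistency principle ¬O[t]ᵢ⊥ is not valid
over interpreted-neighborhood systems. -/
theorem consistency_principle_fails (Ag Const Var Atom : Type)
    [Fintype Ag] [Nonempty Ag] [Countable Const] [Countable Var] [Countable Atom]
    (CS : ConstSpec Ag Const Var Atom) (hCS : CS.csO = ∅)
    (t : TmO Const Var) (i : Ag) :
    ¬ NValid CS (Fm.neg (Fm.obox i t Fm.bot)) := by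
  intro hval
  have h := hval _ (cI CS hCS) crun crun_mem 0
  apply h
  show (cM Ag Const Var Atom).SatP (Fm.obox i t Fm.bot) crun 0
  rw [satP_obox_iff]
  exact bot_mem_cGood i t

end JTO
end

section
/- Given a constant specification CS for JTO such that CS^O = ∅, the strong no-conflicts principle fails in interpreted-neighborhood semantics: there exist a formula φ, deontic terms s, t ∈ Tm^O and an agent i such that not ⊨^N_CS O[s]_i φ → P[t]_i φ; equivalently, there is an interpreted-neighborhood system for JTO_CS and a point satisfying O[s]_i φ ∧ O[t]_i ¬φ. -/
namespace JTO

section Counterexample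

variable {Ag Const Var Atom : Type}

/-! ### Generic lemmas about `NQuasi.SatP` for the defined connectives -/

namespace NQuasi

variable {S : Type} (M : NQuasi Ag Const Var Atom S) (r : ℕ → S) (n : ℕ)

lemma satP_neg (φ : Fm Ag Const Var Atom) :
    M.SatP (Fm.neg φ) r n ↔ ¬ M.SatP φ r n := by
  simp [Fm.neg, NQuasi.SatP]

lemma satP_disj (φ ψ : Fm Ag Const Var Atom) :
    M.SatP (Fm.disj φ ψ) r n ↔ (M.SatP φ r n ∨ M.SatP ψ r n) := by
  simp only [Fm.disj, NQuasi.SatP, satP_neg]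
  tauto

lemma satP_conj (φ ψ : Fm Ag Const Var Atom) :
    M.SatP (Fm.conj φ ψ) r n ↔ (M.SatP φ r n ∧ M.SatP ψ r n) := by
  simp only [Fm.conj, satP_neg, satP_disj]
  tauto

lemma satP_biim (φ ψ : Fm Ag Const Var Atom) :
    M.SatP (Fm.biim φ ψ) r n ↔ (M.SatP φ r n ↔ M.SatP ψ r n) := by
  simp only [Fm.biim, satP_conj, NQuasi.SatP]
  tauto

lemma satP_ev (φ : Fm Ag Const Var Atom) :
    M.SatP (Fm.ev φ) r n ↔ ∃ m, n ≤ m ∧ M.SatP φ r m := by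
  simp [Fm.ev, Fm.top, Fm.neg, NQuasi.SatP]

lemma satP_alw (φ : Fm Ag Const Var Atom) :
    M.SatP (Fm.alw φ) r n ↔ ∀ m, n ≤ m → M.SatP φ r m := by
  simp only [Fm.alw, satP_neg, satP_ev, not_exists, not_and, not_not]

lemma satP_once (φ : Fm Ag Const Var Atom) :
    M.SatP (Fm.once φ) r n ↔ ∃ m, m ≤ n ∧ M.SatP φ r m := by
  simp [Fm.once, Fm.top, Fm.neg, NQuasi.SatP]

lemma satP_sofar (φ : Fm Ag Const Var Atom) :
    M.SatP (Fm.sofar φ) r n ↔ ∀ m, m ≤ n → M.SatP φ r m := by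
  simp only [Fm.sofar, satP_neg, satP_once, not_exists, not_and, not_not]

lemma satP_sprev (φ : Fm Ag Const Var Atom) :
    M.SatP (Fm.sprev φ) r n ↔ (n ≠ 0 ∧ M.SatP φ r (n - 1)) := by
  simp only [Fm.sprev, satP_neg, NQuasi.SatP]
  tauto

lemma satP_pbox (i : Ag) (t : TmO Const Var) (φ : Fm Ag Const Var Atom) :
    M.SatP (Fm.pbox i t φ) r n ↔ ¬ M.SatP (Fm.obox i t (Fm.neg φ)) r n := by
  simp [Fm.pbox, satP_neg]

end NQuasi

/-! ### The obligation assignment on deontic terms -/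

/-- Obligations assigned to deontic terms in the countermodel. -/
def Dset (x y : Var) (p : Atom) : TmO Const Var → Set (Fm Ag Const Var Atom)
  | .var v => {ψ | (v = x ∧ ψ = Fm.atom p) ∨ (v = y ∧ ψ = Fm.neg (Fm.atom p))}
  | .const _ => ∅
  | .ddag t => {ψ | ∃ (j : Ag) (φ : Fm Ag Const Var Atom), ψ = (Fm.obox j t φ).imp φ}
  | .times t s => {ψ | ∃ φ : Fm Ag Const Var Atom,
      φ.imp ψ ∈ Dset x y p t ∧ φ ∈ Dset x y p s}

lemma Dset_shape (x y : Var) (p : Atom) (t : TmO Const Var) :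
    ∀ ψ ∈ Dset (Ag := Ag) x y p t,
      ψ = Fm.atom p ∨ ψ = Fm.neg (Fm.atom p) ∨ ψ = Fm.bot ∨
      ∃ (j : Ag) (s : TmO Const Var) (φ : Fm Ag Const Var Atom),
        ψ = (Fm.obox j s φ).imp φ := by
  induction t with
  | var v =>
      rintro ψ (⟨-, rfl⟩ | ⟨-, rfl⟩)
      · exact Or.inl rfl
      · exact Or.inr (Or.inl rfl)
  | const c => rintro ψ ⟨⟩
  | ddag t ih =>
      rintro ψ ⟨j, φ, rfl⟩
      exact Or.inr (Or.inr (Or.inr ⟨j, t, φ, rfl⟩))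
  | times t s iht ihs =>
      rintro ψ ⟨φ, ht, hs⟩
      rcases iht _ ht with h | h | h | ⟨j, s', φ', h⟩
      · exact absurd h (by simp)
      · rw [Fm.neg] at h
        obtain ⟨rfl, rfl⟩ : φ = Fm.atom p ∧ ψ = Fm.bot := by
          injection h with h1 h2; exact ⟨h1, h2⟩
        exact Or.inr (Or.inr (Or.inl rfl))
      · exact absurd h (by simp)
      · obtain ⟨rfl, rfl⟩ : φ = Fm.obox j s' φ' ∧ ψ = φ' := by
          injection h with h1 h2; exact ⟨h1, h2⟩
        rcases ihs _ hs with h' | h' | h' | ⟨j', s'', φ'', h'⟩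
        · exact absurd h' (by simp)
        · exact absurd h' (by simp [Fm.neg])
        · exact absurd h' (by simp)
        · exact absurd h' (by simp)

lemma Dset_times_bot (x y : Var) (p : Atom) (t s : TmO Const Var)
    (ψ : Fm Ag Const Var Atom) (h : ψ ∈ Dset (Ag := Ag) x y p (.times t s)) :
    ψ = Fm.bot := by
  obtain ⟨φ, ht, hs⟩ := h
  rcases Dset_shape x y p t _ ht with h | h | h | ⟨j, s', φ', h⟩
  · exact absurd h (by simp)
  · rw [Fm.neg] at h
    injection h
  · exact absurd h (by simp)
  · obtain ⟨rfl, rfl⟩ : φ = Fm.obox j s' φ' ∧ ψ = φ' := by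
      injection h with h1 h2; exact ⟨h1, h2⟩
    rcases Dset_shape x y p s _ hs with h' | h' | h' | ⟨j', s'', φ'', h'⟩
    · exact absurd h' (by simp)
    · exact absurd h' (by simp [Fm.neg])
    · exact absurd h' (by simp)
    · exact absurd h' (by simp)

lemma Dset_noc (x y : Var) (hxy : x ≠ y) (p : Atom) (t : TmO Const Var)
    (φ : Fm Ag Const Var Atom) (h1 : φ ∈ Dset (Ag := Ag) x y p t)
    (h2 : Fm.neg φ ∈ Dset (Ag := Ag) x y p t) : False := by
  rw [Fm.neg] at h2
  cases t with
  | var v =>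
      rcases h1 with ⟨rfl, rfl⟩ | ⟨rfl, rfl⟩
      · rcases h2 with ⟨-, h⟩ | ⟨hvy, -⟩
        · exact absurd h (by simp)
        · exact hxy hvy
      · rcases h2 with ⟨hvx, -⟩ | ⟨-, h⟩
        · exact hxy hvx.symm
        · rw [Fm.neg] at h
          injection h with h1' h2'
          exact absurd h1' (by simp)
  | const c => exact h1
  | ddag t =>
      obtain ⟨j, χ, rfl⟩ := h1
      obtain ⟨j', χ', h⟩ := h2
      injection h with h1' h2'
      exact absurd h1' (by simp)
  | times t s =>
      have e1 := Dset_times_bot x y p t s _ h1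
      have e2 := Dset_times_bot x y p t s _ h2
      subst e1
      exact absurd e2 (by simp)

/-! ### The countermodel -/

/-- The single run of the countermodel. -/
def theRun : ℕ → (Fm Ag Const Var Atom ⊕ ℕ) := Sum.inr

/-- The quasi-interpreted-neighborhood countermodel. -/
def Mq (x y : Var) (p : Atom) : NQuasi Ag Const Var Atom (Fm Ag Const Var Atom ⊕ ℕ) where
  R := {theRun}
  N := fun _ _ _ => {A | ∀ n : ℕ, Sum.inr n ∈ A}
  NO := fun _ _ t => {A | ∃ φ ∈ Dset (Ag := Ag) x y p t, Sum.inl φ ∈ A ∧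
      ∀ ψ : Fm Ag Const Var Atom, ψ ≠ φ → Sum.inl ψ ∉ A}
  val := fun _ => ∅
  valF := fun w => match w with
    | .inl χ => {χ}
    | .inr _ => ∅

variable (x y : Var) (p : Atom)

lemma Mq_im (w : Fm Ag Const Var Atom ⊕ ℕ) :
    w ∈ (Mq (Ag := Ag) (Const := Const) x y p).Im ↔ ∃ n : ℕ, w = Sum.inr n := by
  simp [NQuasi.Im, Mq, theRun, eq_comm]

lemma Mq_satset (φ : Fm Ag Const Var Atom) :
    {w | (∃ r' ∈ (Mq (Ag := Ag) x y p).R, ∃ n' : ℕ, r' n' = w ∧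
        (Mq (Ag := Ag) x y p).SatP φ r' n') ∨
      (w ∉ (Mq (Ag := Ag) x y p).Im ∧ φ ∈ (Mq (Ag := Ag) x y p).valF w)} =
    (Mq (Ag := Ag) x y p).tset φ := rfl

lemma Mq_inl_tset (φ χ : Fm Ag Const Var Atom) :
    Sum.inl χ ∈ (Mq (Ag := Ag) (Const := Const) x y p).tset φ ↔ φ = χ := by
  simp only [NQuasi.tset, NQuasi.SatS, Set.mem_setOf_eq]
  constructor
  · rintro (⟨r', hr', n', hrn, -⟩ | ⟨-, hv⟩)
    · rw [show r' = theRun from hr'] at hrn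
      exact absurd hrn (by simp [theRun])
    · exact hv
  · intro h
    refine Or.inr ⟨?_, h⟩
    rw [Mq_im]
    rintro ⟨n, hn⟩
    exact absurd hn (by simp)

lemma Mq_inr_tset (φ : Fm Ag Const Var Atom) (n : ℕ) :
    Sum.inr n ∈ (Mq (Ag := Ag) (Const := Const) x y p).tset φ ↔
      (Mq (Ag := Ag) x y p).SatP φ theRun n := by
  simp only [NQuasi.tset, NQuasi.SatS, Set.mem_setOf_eq]
  constructor
  · rintro (⟨r', hr', n', hrn, hsat⟩ | ⟨him, -⟩)
    · rw [show r' = theRun from hr'] at hrn hsat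
      obtain rfl : n' = n := by simpa [theRun] using hrn
      exact hsat
    · exact absurd ((Mq_im x y p _).2 ⟨n, rfl⟩) him
  · intro h
    exact Or.inl ⟨theRun, rfl, n, rfl, h⟩

lemma Mq_tset_inj (φ ψ : Fm Ag Const Var Atom)
    (h : (Mq (Ag := Ag) (Const := Const) x y p).tset φ =
         (Mq (Ag := Ag) (Const := Const) x y p).tset ψ) : φ = ψ := by
  have := (Mq_inl_tset x y p φ φ).2 rfl
  rw [h, Mq_inl_tset] at this
  exact this.symm

lemma Mq_mem_N (i : Ag) (w : Fm Ag Const Var Atom ⊕ ℕ) (t : TmE Const Var)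
    (φ : Fm Ag Const Var Atom) :
    (Mq (Ag := Ag) x y p).tset φ ∈ (Mq (Ag := Ag) x y p).N i w t ↔
      ∀ n : ℕ, (Mq (Ag := Ag) x y p).SatP φ theRun n := by
  show (∀ n : ℕ, Sum.inr n ∈ (Mq (Ag := Ag) x y p).tset φ) ↔ _
  simp only [Mq_inr_tset]

lemma Mq_mem_NO (i : Ag) (w : Fm Ag Const Var Atom ⊕ ℕ) (t : TmO Const Var)
    (φ : Fm Ag Const Var Atom) :
    (Mq (Ag := Ag) x y p).tset φ ∈ (Mq (Ag := Ag) x y p).NO i w t ↔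
      φ ∈ Dset (Ag := Ag) x y p t := by
  constructor
  · rintro ⟨χ, hχ, hmem, -⟩
    rw [Mq_inl_tset] at hmem
    exact hmem ▸ hχ
  · intro h
    refine ⟨φ, h, (Mq_inl_tset x y p φ φ).2 rfl, fun ψ hne hm => ?_⟩
    rw [Mq_inl_tset] at hm
    exact hne hm.symm

lemma Mq_satP_jbox (i : Ag) (t : TmE Const Var) (φ : Fm Ag Const Var Atom)
    (r : ℕ → Fm Ag Const Var Atom ⊕ ℕ) (n : ℕ) :
    (Mq (Ag := Ag) x y p).SatP (Fm.jbox i t φ) r n ↔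
      ∀ m : ℕ, (Mq (Ag := Ag) x y p).SatP φ theRun m := by
  show (Mq (Ag := Ag) x y p).tset φ ∈ (Mq (Ag := Ag) x y p).N i (r n) t ↔ _
  exact Mq_mem_N x y p i (r n) t φ

lemma Mq_satP_obox (i : Ag) (t : TmO Const Var) (φ : Fm Ag Const Var Atom)
    (r : ℕ → Fm Ag Const Var Atom ⊕ ℕ) (n : ℕ) :
    (Mq (Ag := Ag) x y p).SatP (Fm.obox i t φ) r n ↔
      φ ∈ Dset (Ag := Ag) x y p t := by
  show (Mq (Ag := Ag) x y p).tset φ ∈ (Mq (Ag := Ag) x y p).NO i (r n) t ↔ _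
  exact Mq_mem_NO x y p i (r n) t φ

/-! ### Soundness of the axioms in the countermodel -/

lemma axiom_sound (x y : Var) (hxy : x ≠ y) (p : Atom)
    {φ : Fm Ag Const Var Atom} (h : IsAxiom φ) :
    ∀ n : ℕ, (Mq (Ag := Ag) x y p).SatP φ theRun n := by
  induction h with
  | @taut φ h =>
      intro n
      classical
      have key := h (fun a => decide ((Mq (Ag := Ag) x y p).SatP a theRun n)) ?_ ?_
      · exact of_decide_eq_true key
      · exact decide_eq_false (by simp [NQuasi.SatP])
      · intro a b
        by_cases ha : (Mq (Ag := Ag) x y p).SatP a theRun n <;>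
          by_cases hb2 : (Mq (Ag := Ag) x y p).SatP b theRun n <;>
          simp [NQuasi.SatP, ha, hb2]
  | nextK φ ψ =>
      intro n
      simp only [NQuasi.SatP]
      exact fun h1 h2 => h1 h2
  | alwK φ ψ =>
      intro n h1 h2
      rw [NQuasi.satP_alw] at h1 h2 ⊢
      intro m hm
      exact h1 m hm (h2 m hm)
  | fn φ =>
      intro n
      rw [NQuasi.satP_biim]
      exact Iff.rfl
  | ind φ =>
      intro n h1 h2
      rw [NQuasi.satP_alw] at h1 ⊢
      intro m hm
      induction m, hm using Nat.le_induction with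
      | base => exact h2
      | succ m hm ih => exact h1 m hm ih
  | untl1 φ ψ =>
      intro n h
      rw [NQuasi.satP_ev]
      simp only [NQuasi.SatP] at h
      obtain ⟨m, h1, h2, -⟩ := h
      exact ⟨m, h1, h2⟩
  | untl2 φ ψ =>
      intro n
      rw [NQuasi.satP_biim, NQuasi.satP_disj, NQuasi.satP_conj]
      simp only [NQuasi.SatP]
      constructor
      · rintro ⟨m, hnm, hψ, hφ⟩
        rcases eq_or_lt_of_le hnm with rfl | hlt
        · exact Or.inl hψ
        · exact Or.inr ⟨hφ n le_rfl hlt, m, hlt, hψ, fun k h1 h2 => hφ k (by omega) h2⟩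
      · rintro (hψ | ⟨hφ, m, hm, hψ, hφ'⟩)
        · exact ⟨n, le_rfl, hψ, fun k h1 h2 => absurd h2 (by omega)⟩
        · refine ⟨m, by omega, hψ, fun k h1 h2 => ?_⟩
          rcases eq_or_lt_of_le h1 with rfl | hk
          · exact hφ
          · exact hφ' k (by omega) h2
  | sofarK φ ψ =>
      intro n h1 h2
      rw [NQuasi.satP_sofar] at h1 h2 ⊢
      intro m hm
      exact h1 m hm (h2 m hm)
  | wprevK φ ψ =>
      intro n
      simp only [NQuasi.SatP]
      rintro (h1 | h1) (h2 | h2)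
      · exact Or.inl h1
      · exact Or.inl h1
      · exact Or.inl h2
      · exact Or.inr (h1 h2)
  | sw φ =>
      intro n h
      rw [NQuasi.satP_sprev] at h
      exact Or.inr h.2
  | initial =>
      intro n
      rw [NQuasi.satP_once]
      exact ⟨0, Nat.zero_le n, Or.inl rfl⟩
  | sofarInd φ =>
      intro n h1 h2
      rw [NQuasi.satP_sofar] at h1 ⊢
      have key : ∀ k, k ≤ n → (Mq (Ag := Ag) x y p).SatP φ theRun (n - k) := by
        intro k
        induction k with
        | zero => intro _; simpa using h2
        | succ k ih =>
            intro hk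
            have hw : n - k = 0 ∨ (Mq (Ag := Ag) x y p).SatP φ theRun (n - k - 1) :=
              h1 (n - k) (by omega) (ih (by omega))
            rcases hw with h0 | hh
            · exact absurd h0 (by omega)
            · have e : n - (k + 1) = n - k - 1 := by omega
              rw [e]; exact hh
      intro m hm
      have := key (n - m) (by omega)
      rwa [Nat.sub_sub_self hm] at this
  | snce1 φ ψ =>
      intro n h
      rw [NQuasi.satP_once]
      simp only [NQuasi.SatP] at h
      obtain ⟨m, h1, h2, -⟩ := h
      exact ⟨m, h1, h2⟩
  | snce2 φ ψ =>
      intro n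
      rw [NQuasi.satP_biim, NQuasi.satP_disj, NQuasi.satP_conj, NQuasi.satP_sprev]
      simp only [NQuasi.SatP]
      constructor
      · rintro ⟨m, hm, hψ, hφ⟩
        rcases eq_or_lt_of_le hm with rfl | hlt
        · exact Or.inl hψ
        · exact Or.inr ⟨hφ n hlt le_rfl, by omega,
            m, by omega, hψ, fun k h1 h2 => hφ k h1 (by omega)⟩
      · rintro (hψ | ⟨hφ, hn0, m, hm, hψ, hφ'⟩)
        · exact ⟨n, le_rfl, hψ, fun k h1 h2 => absurd h1 (by omega)⟩
        · refine ⟨m, by omega, hψ, fun k h1 h2 => ?_⟩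
          rcases eq_or_lt_of_le h2 with rfl | hk
          · exact hφ
          · exact hφ' k h1 (by omega)
  | fp φ =>
      intro n h
      have key : (Mq (Ag := Ag) x y p).SatP (Fm.sprev φ) theRun (n + 1) := by
        rw [NQuasi.satP_sprev]
        exact ⟨by omega, by simpa using h⟩
      exact key
  | pf φ =>
      intro n
      simp only [NQuasi.SatP]
      intro h
      cases n with
      | zero => exact Or.inl rfl
      | succ m => exact Or.inr (by simpa using h)
  | app i t s φ ψ =>
      intro n h1 h2
      rw [Mq_satP_jbox] at h1 h2 ⊢
      intro m
      exact h1 m (h2 m)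
  | sum1 i t s φ =>
      intro n h
      rw [Mq_satP_jbox] at h ⊢
      exact h
  | sum2 i t s φ =>
      intro n h
      rw [Mq_satP_jbox] at h ⊢
      exact h
  | fact i t φ =>
      intro n h
      rw [Mq_satP_jbox] at h
      exact h n
  | pos i t φ =>
      intro n h
      rw [Mq_satP_jbox] at h ⊢
      intro m
      rw [Mq_satP_jbox]
      exact h
  | appO i t s φ ψ =>
      intro n h1 h2
      rw [Mq_satP_obox] at h1 h2 ⊢
      exact ⟨φ, h1, h2⟩
  | noc i t φ =>
      intro n h
      rw [Mq_satP_obox] at h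
      rw [NQuasi.satP_pbox, Mq_satP_obox]
      exact fun hneg => Dset_noc x y hxy p t φ h hneg
  | ofact i t φ =>
      intro n
      rw [Mq_satP_obox]
      exact ⟨i, φ, rfl⟩

lemma EIter_sound (x y : Var) (hxy : x ≠ y) (p : Atom)
    {φ : Fm Ag Const Var Atom} (h : EIter φ) :
    ∀ n : ℕ, (Mq (Ag := Ag) x y p).SatP φ theRun n := by
  induction h with
  | base hax =>
      intro n
      rw [Mq_satP_jbox]
      exact fun m => axiom_sound x y hxy p hax m
  | step h ih =>
      intro n
      rw [Mq_satP_jbox]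
      exact fun m => ih m

/-! ### The interpreted-neighborhood system -/

def Mod (x y : Var) (hxy : x ≠ y) (p : Atom) (CS : ConstSpec Ag Const Var Atom)
    (hCS : CS.csO = ∅) :
    NIS Ag Const Var Atom (Fm Ag Const Var Atom ⊕ ℕ) CS where
  toNQuasi := Mq x y p
  Sne := ⟨Sum.inr 0⟩
  Rne := ⟨theRun, rfl⟩
  Ncs := by
    intro i t φ hmem w hw
    have hE : EIter (Fm.jbox i t φ) := hmem.2
    have hall : ∀ n, (Mq (Ag := Ag) x y p).SatP φ theRun n := by
      cases hE with
      | base hax => exact fun n => axiom_sound x y hxy p hax n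
      | step h => exact EIter_sound x y hxy p h
    exact (Mq_mem_N x y p i w t φ).2 hall
  Napp := by
    intro i w hw t s φ ψ h1 h2
    rw [Mq_mem_N] at h1 h2 ⊢
    intro m
    exact h1 m (h2 m)
  Nsum := by
    intro i w hw t s φ h
    exact ⟨h, h⟩
  Nrefl := by
    intro i w hw t φ h
    obtain ⟨n, rfl⟩ := (Mq_im x y p w).1 hw
    exact h n
  Npos := by
    intro i w hw t φ h
    rw [Mq_mem_N] at h ⊢
    intro m
    rw [Mq_satP_jbox]
    exact h
  NOcs := by
    intro i t φ hmem
    rw [hCS] at hmem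
    exact absurd hmem (Set.notMem_empty _)
  NOapp := by
    intro i w hw t s φ ψ h1 h2
    rw [Mq_mem_NO] at h1 h2 ⊢
    exact ⟨φ, h1, h2⟩
  NOnoc := by
    intro i w hw t φ h hneg
    rw [Mq_mem_NO] at h hneg
    exact Dset_noc x y hxy p t φ h hneg
  NOfact := by
    intro i w hw t φ
    rw [Mq_mem_NO]
    exact ⟨i, φ, rfl⟩

end Counterexample



/-- if CS^O = ∅, the strong no-conflicts principle
O[s]ᵢφ → P[t]ᵢφ is not valid over interpreted-neighborhood systems; equivalently,
some interpreted-neighborhood system for JTO_CS satisfies O[s]ᵢφ ∧ O[t]ᵢ¬φ at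
some point. -/
theorem strong_no_conflicts_fails (Ag Const Var Atom : Type)
    [Fintype Ag] [Nonempty Ag] [Countable Const] [Countable Var] [Countable Atom]
    (CS : ConstSpec Ag Const Var Atom) (hCS : CS.csO = ∅)
    (x y : Var) (hxy : x ≠ y) (p : Atom) (i : Ag) :
    ∃ (φ : Fm Ag Const Var Atom) (s t : TmO Const Var) (j : Ag),
      ¬ NValid CS ((Fm.obox j s φ).imp (Fm.pbox j t φ)) ∧
      ∃ (S : Type) (I : NIS Ag Const Var Atom S CS), ∃ r ∈ I.R, ∃ n : ℕ,
        I.SatP (Fm.conj (Fm.obox j s φ) (Fm.obox j t (Fm.neg φ))) r n := by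
  refine ⟨Fm.atom p, TmO.var x, TmO.var y, i, ?_, ?_⟩
  · intro h
    have hval := h _ (Mod x y hxy p CS hCS) theRun rfl 0
    have hs1 : (Mq (Ag := Ag) (Const := Const) x y p).SatP
        (Fm.obox i (TmO.var x) (Fm.atom p)) theRun 0 :=
      (Mq_satP_obox x y p i _ _ theRun 0).2 (Or.inl ⟨rfl, rfl⟩)
    have hs2 : (Mq (Ag := Ag) (Const := Const) x y p).SatP
        (Fm.obox i (TmO.var y) (Fm.neg (Fm.atom p))) theRun 0 :=
      (Mq_satP_obox x y p i _ _ theRun 0).2 (Or.inr ⟨rfl, rfl⟩)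
    have hp : (Mq (Ag := Ag) (Const := Const) x y p).SatP
        (Fm.pbox i (TmO.var y) (Fm.atom p)) theRun 0 :=
      hval hs1
    rw [NQuasi.satP_pbox] at hp
    exact hp hs2
  · refine ⟨_, Mod x y hxy p CS hCS, theRun, rfl, 0, ?_⟩
    show (Mq (Ag := Ag) (Const := Const) x y p).SatP
        (Fm.conj (Fm.obox i (TmO.var x) (Fm.atom p))
          (Fm.obox i (TmO.var y) (Fm.neg (Fm.atom p)))) theRun 0
    rw [NQuasi.satP_conj]
    exact ⟨(Mq_satP_obox x y p i _ _ theRun 0).2 (Or.inl ⟨rfl, rfl⟩),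
      (Mq_satP_obox x y p i _ _ theRun 0).2 (Or.inr ⟨rfl, rfl⟩)⟩

end JTO
end
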